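/- Every (p,q)-special partial word (with p, q > 1 coprime) has strong periods p and q but does not have period 1. Consequently H(n,p,q) ≤ H^d(n,p,q) for all n ≥ max(p,q). -/

import Mathlib

/-- A symbol of a partial word (`none` is a hole `◊`) is compatible with a solid letter. -/
def PWCompatible {α : Type*} (x : Option α) (a : α) : Prop :=
  x = none ∨ x = some a

/-- `p` is a strong period of the partial word `X`. -/
def IsStrongPeriod {α : Type*} (X : List (Option α)) (p : ℕ) : Prop :=
  0 < p ∧ ∃ P : ℕ → α, ∀ (i : ℕ) (h : i < X.length), PWCompatible (X.get ⟨i, h⟩) (P (i % p))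

/-- A `(p,q)`-special partial word (`none` = hole, `some true` = 'b', `some false` = 'a'). -/
def IsSpecial (S : List (Option Bool)) (p q : ℕ) : Prop :=
  ∃ l < S.length, ∀ (i : ℕ) (h : i < S.length),
    S.get ⟨i, h⟩ =
      if (p : ℤ) ∣ ((l : ℤ) - i) then
        (if (q : ℤ) ∣ ((l : ℤ) - i) then some true else none)
      else
        (if (q : ℤ) ∣ ((l : ℤ) - i) then none else some false)

lemma mod_eq_of_dvd_sub {r l i : ℕ} (h : (r : ℤ) ∣ ((l : ℤ) - i)) : i % r = l % r := by
  have : (i : ℤ) % r = (l : ℤ) % r := Int.ModEq.symm (Int.modEq_iff_dvd.2 h).symm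
  omega

lemma special_strong {S : List (Option Bool)} {p q r : ℕ} (hr : 0 < r)
    (hrpq : r = p ∨ r = q) (hS : IsSpecial S p q) : IsStrongPeriod S r := by
  obtain ⟨l, hl, hspec⟩ := hS
  refine ⟨hr, fun j => if j = l % r then true else false, fun i h => ?_⟩
  rw [hspec i h]
  by_cases hd : (r : ℤ) ∣ ((l : ℤ) - i)
  · have hmod : i % r = l % r := mod_eq_of_dvd_sub hd
    rcases hrpq with rfl | rfl
    · simp only [if_pos hd, hmod, if_pos rfl]
      split
      · exact Or.inr rfl
      · exact Or.inl rfl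
    · simp only [if_pos hd, hmod, if_pos rfl]
      split
      · exact Or.inr rfl
      · exact Or.inl rfl
  · have hmod : ¬ i % r = l % r := by
      intro hm
      apply hd
      have : (i : ℤ) % r = (l : ℤ) % r := by omega
      exact Int.modEq_iff_dvd.1 this
    rcases hrpq with rfl | rfl
    · simp only [if_neg hd, hmod, if_neg hmod]
      split
      · exact Or.inl rfl
      · exact Or.inr rfl
    · simp only [if_neg hd, hmod, if_neg hmod]
      split
      · exact Or.inl rfl
      · exact Or.inr rfl

theorem special_periods_and_H_le_Hd (p q : ℕ) (hp : 1 < p) (hq : 1 < q)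
    (hcop : Nat.Coprime p q) :
    (∀ S : List (Option Bool), max p q ≤ S.length → IsSpecial S p q →
      IsStrongPeriod S p ∧ IsStrongPeriod S q ∧ ¬ IsStrongPeriod S 1) ∧
    (∀ n : ℕ, max p q ≤ n →
      sInf {h : ℕ | ∃ S : List (Option Bool), S.length = n ∧
          IsStrongPeriod S p ∧ IsStrongPeriod S q ∧ ¬ IsStrongPeriod S 1 ∧
          S.count none = h} ≤
        sInf {h : ℕ | ∃ S : List (Option Bool),
          IsSpecial S p q ∧ S.length = n ∧ S.count none = h}) := by
  have key : ∀ S : List (Option Bool), max p q ≤ S.length → IsSpecial S p q →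
      IsStrongPeriod S p ∧ IsStrongPeriod S q ∧ ¬ IsStrongPeriod S 1 := by
    intro S hlen hS
    refine ⟨special_strong (by omega) (Or.inl rfl) hS,
      special_strong (by omega) (Or.inr rfl) hS, ?_⟩
    rintro ⟨-, P, hP⟩
    obtain ⟨l, hl, hspec⟩ := hS
    have hlen2 : 2 ≤ S.length := le_trans (by omega) hlen
    -- position l is `some true`
    have htrue : S.get ⟨l, hl⟩ = some true := by
      rw [hspec l hl]
      simp
    -- find a position with `some false`
    have hndvd1 : ∀ r : ℕ, 1 < r → ∀ z : ℤ, z = 1 ∨ z = -1 → ¬ (r : ℤ) ∣ z := by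
      rintro r hr z (rfl | rfl) hd
      · have := Int.le_of_dvd one_pos hd; omega
      · rw [Int.dvd_neg] at hd; have := Int.le_of_dvd one_pos hd; omega
    obtain ⟨i, hi, hfalse⟩ : ∃ i, ∃ hi : i < S.length, S.get ⟨i, hi⟩ = some false := by
      by_cases h0 : 1 ≤ l
      · refine ⟨l - 1, by omega, ?_⟩
        rw [hspec (l - 1) (by omega)]
        have h1 : (l : ℤ) - (l - 1 : ℕ) = 1 := by omega
        rw [h1, if_neg (hndvd1 p hp 1 (Or.inl rfl)), if_neg (hndvd1 q hq 1 (Or.inl rfl))]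
      · refine ⟨l + 1, by omega, ?_⟩
        rw [hspec (l + 1) (by omega)]
        have h1 : (l : ℤ) - (l + 1 : ℕ) = -1 := by omega
        rw [h1, if_neg (hndvd1 p hp _ (Or.inr rfl)), if_neg (hndvd1 q hq _ (Or.inr rfl))]
    have h1 := hP l hl
    have h2 := hP i hi
    rw [htrue] at h1
    rw [hfalse] at h2
    rcases h1 with h1 | h1
    · exact nomatch h1
    rcases h2 with h2 | h2
    · exact nomatch h2
    rw [Nat.mod_one] at h1 h2
    rw [← h2] at h1
    exact nomatch h1
  refine ⟨key, fun n hn => ?_⟩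
  -- construct a special word of length n
  set f : ℕ → Option Bool := fun i =>
    if (p : ℤ) ∣ ((0 : ℤ) - i) then
      (if (q : ℤ) ∣ ((0 : ℤ) - i) then some true else none)
    else
      (if (q : ℤ) ∣ ((0 : ℤ) - i) then none else some false) with hf
  have hnpos : 0 < n := by omega
  have hspecial : IsSpecial ((List.range n).map f) p q := by
    refine ⟨0, by simpa using hnpos, fun i h => ?_⟩
    have hi : i < n := by simpa using h
    simp [hf, List.getElem_map, List.getElem_range]
  have hBne : {h : ℕ | ∃ S : List (Option Bool),
      IsSpecial S p q ∧ S.length = n ∧ S.count none = h}.Nonempty :=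
    ⟨_, (List.range n).map f, hspecial, by simp, rfl⟩
  obtain ⟨S, hSspec, hSlen, hScount⟩ := Nat.sInf_mem hBne
  obtain ⟨hp', hq', h1'⟩ := key S (hSlen ▸ hn) hSspec
  exact Nat.sInf_le ⟨S, hSlen, hp', hq', h1', hScount⟩
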